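/- For a real number λ with 0 < |λ| < 1 and a nonnegative integer S, the sum ∑_{j₁=-∞}^{∞} ∑_{j₂=-∞}^{∞} λ^{|j₁|} λ^{|j₂|} λ^{|S-j₁-j₂|} equals λ^S · (2 + 3S + S² + 2(4 - S²)λ² + (2 - 3S + S²)λ⁴)/(2(1-λ²)²). -/

import Mathlib

section aux

variable {l : ℝ}

private lemma aux_abs_sq (h' : |l| < 1) : |l ^ 2| < 1 := by
  rw [abs_pow]
  calc |l| ^ 2 ≤ |l| * 1 := by
        rw [sq]; exact mul_le_mul_of_nonneg_left h'.le (abs_nonneg l)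
    _ < 1 := by rw [mul_one]; exact h'

private lemma aux_ne (h' : |l| < 1) : (1 : ℝ) - l ^ 2 ≠ 0 := by
  have h2 : l ^ 2 < 1 := lt_of_abs_lt (aux_abs_sq h')
  linarith

private lemma aux_geo (h' : |l| < 1) :
    HasSum (fun k : ℕ => (l ^ 2) ^ k) (1 - l ^ 2)⁻¹ :=
  hasSum_geometric_of_abs_lt_one (aux_abs_sq h')

private lemma aux_arith (h' : |l| < 1) :
    HasSum (fun k : ℕ => (k : ℝ) * (l ^ 2) ^ k) (l ^ 2 / (1 - l ^ 2) ^ 2) :=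
  hasSum_coe_mul_geometric_of_norm_lt_one (by rw [Real.norm_eq_abs]; exact aux_abs_sq h')

/-- Sum of `(t + c) * x^t`. -/
private lemma aux_arith_geo (h' : |l| < 1) (c : ℝ) :
    HasSum (fun t : ℕ => ((t : ℝ) + c) * (l ^ 2) ^ t)
      (l ^ 2 / (1 - l ^ 2) ^ 2 + c * (1 - l ^ 2)⁻¹) := by
  have := (aux_arith h').add ((aux_geo h').mul_left c)
  exact this.congr_fun fun t => by ring

private noncomputable def Hfun (l : ℝ) (n : ℤ) : ℝ :=
  ((n.natAbs : ℝ) + 1) * l ^ n.natAbs + 2 * l ^ (n.natAbs + 2) / (1 - l ^ 2)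

private lemma aux_F_nat (h' : |l| < 1) (m : ℕ) :
    HasSum (fun j : ℤ => l ^ j.natAbs * l ^ ((m : ℤ) - j).natAbs) (Hfun l m) := by
  set f : ℤ → ℝ := fun j : ℤ => l ^ j.natAbs * l ^ ((m : ℤ) - j).natAbs with hf
  have hpos : HasSum (fun k : ℕ => f k)
      (l ^ (m + 2) * (1 - l ^ 2)⁻¹ + ∑ k ∈ Finset.range (m + 1), f k) := by
    rw [← hasSum_nat_add_iff (m + 1)]
    refine (((aux_geo h').mul_left (l ^ (m + 2)))).congr_fun fun t => ?_
    show l ^ ((((t + (m + 1) : ℕ)) : ℤ)).natAbs *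
        l ^ ((m : ℤ) - (((t + (m + 1) : ℕ)) : ℤ)).natAbs = _
    have h1 : ((((t + (m + 1) : ℕ)) : ℤ)).natAbs = t + (m + 1) := by omega
    have h2 : ((m : ℤ) - (((t + (m + 1) : ℕ)) : ℤ)).natAbs = t + 1 := by omega
    rw [h1, h2, ← pow_mul, ← pow_add, ← pow_add]
    congr 1
    ring
  have hrange : ∑ k ∈ Finset.range (m + 1), f k = ((m : ℝ) + 1) * l ^ m := by
    have hterm : ∀ k ∈ Finset.range (m + 1), f (k : ℤ) = l ^ m := by
      intro k hk
      have hk' : k ≤ m := by have := Finset.mem_range.mp hk; omega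
      have h1 : ((k : ℤ)).natAbs = k := by omega
      have h2 : ((m : ℤ) - (k : ℤ)).natAbs = m - k := by omega
      show l ^ ((k : ℤ)).natAbs * l ^ ((m : ℤ) - (k : ℤ)).natAbs = l ^ m
      rw [h1, h2, ← pow_add]
      congr 1
      omega
    rw [Finset.sum_congr rfl hterm, Finset.sum_const, Finset.card_range, nsmul_eq_mul]
    push_cast; ring
  have hneg : HasSum (fun t : ℕ => f (-((t : ℤ) + 1))) (l ^ (m + 2) * (1 - l ^ 2)⁻¹) := by
    refine (((aux_geo h').mul_left (l ^ (m + 2)))).congr_fun fun t => ?_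
    show l ^ (-((t : ℤ) + 1)).natAbs * l ^ ((m : ℤ) - (-((t : ℤ) + 1))).natAbs = _
    have h1 : (-((t : ℤ) + 1)).natAbs = t + 1 := by omega
    have h2 : ((m : ℤ) - (-((t : ℤ) + 1))).natAbs = m + (t + 1) := by omega
    rw [h1, h2, ← pow_mul, ← pow_add, ← pow_add]
    congr 1
    ring
  have htot := hpos.of_nat_of_neg_add_one hneg
  rw [hrange] at htot
  convert htot using 1
  simp only [Hfun, Int.natAbs_natCast]
  field_simp
  ring

private lemma aux_F (h' : |l| < 1) (n : ℤ) :
    HasSum (fun j : ℤ => l ^ j.natAbs * l ^ (n - j).natAbs) (Hfun l n) := by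
  rcases Int.natAbs_eq n with hn | hn
  · rw [hn]; exact aux_F_nat h' n.natAbs
  · have hpos := aux_F_nat h' n.natAbs
    have := ((Equiv.neg ℤ).hasSum_iff).mpr hpos
    have heq : Hfun l n = Hfun l (n.natAbs : ℤ) := by
      have hh : ((n.natAbs : ℤ)).natAbs = n.natAbs := Int.natAbs_natCast _
      rw [Hfun, Hfun, hh]
    rw [heq]
    refine this.congr_fun fun j => ?_
    show l ^ j.natAbs * l ^ (n - j).natAbs
      = l ^ (-j).natAbs * l ^ ((n.natAbs : ℤ) - (-j)).natAbs
    have h1 : j.natAbs = (-j).natAbs := by omega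
    have h2 : (n - j).natAbs = ((n.natAbs : ℤ) - (-j)).natAbs := by omega
    rw [h1, h2]

private lemma aux_gauss (n : ℕ) : ∑ k ∈ Finset.range n, ((k : ℝ) + 1) = n * (n + 1) / 2 := by
  induction n with
  | zero => simp
  | succ n ih =>
    rw [Finset.sum_range_succ, ih]
    push_cast
    ring

end aux

set_option maxHeartbeats 1000000 in
theorem stmt_7 (l : ℝ) (h : 0 < |l|) (h' : |l| < 1) (S : ℕ) :
    ∑' p : ℤ × ℤ, l ^ p.1.natAbs * l ^ p.2.natAbs * l ^ ((S : ℤ) - p.1 - p.2).natAbs =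
      l ^ S * (2 + 3 * (S : ℝ) + (S : ℝ) ^ 2 + 2 * (4 - (S : ℝ) ^ 2) * l ^ 2 +
        (2 - 3 * (S : ℝ) + (S : ℝ) ^ 2) * l ^ 4) / (2 * (1 - l ^ 2) ^ 2) := by
  have hne : (1 : ℝ) - l ^ 2 ≠ 0 := aux_ne h'
  -- Summability over the product
  have hzsum : Summable (fun j : ℤ => |l| ^ j.natAbs) := by
    have habs : |(|l|)| < 1 := by rwa [abs_abs]
    refine Summable.of_nat_of_neg_add_one ?_ ?_
    · refine ((hasSum_geometric_of_abs_lt_one habs).congr_fun fun n => ?_).summable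
      show |l| ^ ((n : ℤ)).natAbs = |l| ^ n
      rw [Int.natAbs_natCast]
    · refine (((hasSum_geometric_of_abs_lt_one habs).mul_left |l|).congr_fun fun n => ?_).summable
      show |l| ^ (-((n : ℤ) + 1)).natAbs = |l| * |l| ^ n
      have h1 : (-((n : ℤ) + 1)).natAbs = n + 1 := by omega
      rw [h1, pow_succ]
      ring
  have habsle : ∀ j : ℤ, (0:ℝ) ≤ |l| ^ j.natAbs := fun j => pow_nonneg (abs_nonneg l) _
  have hps : Summable (fun p : ℤ × ℤ => |l| ^ p.1.natAbs * |l| ^ p.2.natAbs) :=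
    hzsum.mul_of_nonneg hzsum habsle habsle
  have hsum : Summable (fun p : ℤ × ℤ =>
      l ^ p.1.natAbs * l ^ p.2.natAbs * l ^ ((S : ℤ) - p.1 - p.2).natAbs) := by
    refine Summable.of_norm_bounded hps fun p => ?_
    rw [Real.norm_eq_abs, abs_mul, abs_mul, abs_pow, abs_pow, abs_pow]
    have hle : |l| ^ ((S : ℤ) - p.1 - p.2).natAbs ≤ 1 :=
      pow_le_one₀ (abs_nonneg l) h'.le
    calc |l| ^ p.1.natAbs * |l| ^ p.2.natAbs * |l| ^ ((S : ℤ) - p.1 - p.2).natAbs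
        ≤ |l| ^ p.1.natAbs * |l| ^ p.2.natAbs * 1 := by
          refine mul_le_mul_of_nonneg_left hle (mul_nonneg (habsle _) (habsle _))
      _ = |l| ^ p.1.natAbs * |l| ^ p.2.natAbs := by rw [mul_one]
  obtain ⟨A, hA⟩ := hsum
  -- Fibers
  have hfiber : ∀ j1 : ℤ, HasSum (fun j2 : ℤ =>
      l ^ j1.natAbs * l ^ j2.natAbs * l ^ ((S : ℤ) - j1 - j2).natAbs)
      (l ^ j1.natAbs * Hfun l ((S : ℤ) - j1)) := by
    intro j1
    have := (aux_F h' ((S : ℤ) - j1)).mul_left (l ^ j1.natAbs)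
    refine this.congr_fun fun j2 => ?_
    rw [mul_assoc]
  have houter : HasSum (fun j1 : ℤ => l ^ j1.natAbs * Hfun l ((S : ℤ) - j1)) A :=
    hA.prod_fiberwise fun j1 => hfiber j1
  -- Now compute the outer sum explicitly
  set g : ℤ → ℝ := fun j : ℤ => l ^ j.natAbs * Hfun l ((S : ℤ) - j) with hg
  -- negative part
  have hneg : HasSum (fun t : ℕ => g (-((t : ℤ) + 1)))
      (l ^ (S + 2) * (l ^ 2 / (1 - l ^ 2) ^ 2 + ((S : ℝ) + 2) * (1 - l ^ 2)⁻¹)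
        + 2 * l ^ (S + 4) / (1 - l ^ 2) * (1 - l ^ 2)⁻¹) := by
    have h1 := (aux_arith_geo h' ((S : ℝ) + 2)).mul_left (l ^ (S + 2))
    have h2 := (aux_geo h').mul_left (2 * l ^ (S + 4) / (1 - l ^ 2))
    refine (h1.add h2).congr_fun fun t => ?_
    show l ^ (-((t : ℤ) + 1)).natAbs * Hfun l ((S : ℤ) - (-((t : ℤ) + 1))) = _
    have ha : (-((t : ℤ) + 1)).natAbs = t + 1 := by omega
    have hb : ((S : ℤ) - (-((t : ℤ) + 1))).natAbs = S + t + 1 := by omega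
    rw [ha, Hfun, hb]
    have e1 : l ^ (t + 1) * l ^ (S + t + 1) = l ^ (S + 2) * (l ^ 2) ^ t := by
      rw [← pow_mul, ← pow_add, ← pow_add]; congr 1; ring
    have e2 : l ^ (t + 1) * l ^ (S + t + 1 + 2) = l ^ (S + 4) * (l ^ 2) ^ t := by
      rw [← pow_mul, ← pow_add, ← pow_add]; congr 1; ring
    push_cast
    calc l ^ (t + 1) * (((S:ℝ) + (t:ℝ) + 1 + 1) * l ^ (S + t + 1)
            + 2 * l ^ (S + t + 1 + 2) / (1 - l ^ 2))
        = ((t:ℝ) + ((S:ℝ) + 2)) * (l ^ (t + 1) * l ^ (S + t + 1))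
            + 2 / (1 - l ^ 2) * (l ^ (t + 1) * l ^ (S + t + 1 + 2)) := by ring
      _ = l ^ (S + 2) * (((t:ℝ) + ((S:ℝ) + 2)) * (l ^ 2) ^ t)
            + 2 * l ^ (S + 4) / (1 - l ^ 2) * (l ^ 2) ^ t := by rw [e1, e2]; ring
  -- nonnegative part: tail
  have hpos : HasSum (fun k : ℕ => g k)
      ((l ^ (S + 2) * (l ^ 2 / (1 - l ^ 2) ^ 2 + 2 * (1 - l ^ 2)⁻¹)
        + 2 * l ^ (S + 4) / (1 - l ^ 2) * (1 - l ^ 2)⁻¹)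
        + ∑ k ∈ Finset.range (S + 1), g k) := by
    rw [← hasSum_nat_add_iff (S + 1)]
    have h1 := (aux_arith_geo h' 2).mul_left (l ^ (S + 2))
    have h2 := (aux_geo h').mul_left (2 * l ^ (S + 4) / (1 - l ^ 2))
    refine (h1.add h2).congr_fun fun t => ?_
    show l ^ (((t + (S + 1) : ℕ) : ℤ)).natAbs
        * Hfun l ((S : ℤ) - ((t + (S + 1) : ℕ) : ℤ)) = _
    have ha : (((t + (S + 1) : ℕ)) : ℤ).natAbs = t + (S + 1) := by omega
    have hb : ((S : ℤ) - ((t + (S + 1) : ℕ) : ℤ)).natAbs = t + 1 := by omega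
    rw [ha, Hfun, hb]
    have e1 : l ^ (t + (S + 1)) * l ^ (t + 1) = l ^ (S + 2) * (l ^ 2) ^ t := by
      rw [← pow_mul, ← pow_add, ← pow_add]; congr 1; ring
    have e2 : l ^ (t + (S + 1)) * l ^ (t + 1 + 2) = l ^ (S + 4) * (l ^ 2) ^ t := by
      rw [← pow_mul, ← pow_add, ← pow_add]; congr 1; ring
    push_cast
    calc l ^ (t + (S + 1)) * (((t:ℝ) + 1 + 1) * l ^ (t + 1)
            + 2 * l ^ (t + 1 + 2) / (1 - l ^ 2))
        = ((t:ℝ) + 2) * (l ^ (t + (S + 1)) * l ^ (t + 1))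
            + 2 / (1 - l ^ 2) * (l ^ (t + (S + 1)) * l ^ (t + 1 + 2)) := by ring
      _ = l ^ (S + 2) * (((t:ℝ) + 2) * (l ^ 2) ^ t)
            + 2 * l ^ (S + 4) / (1 - l ^ 2) * (l ^ 2) ^ t := by rw [e1, e2]; ring
  -- range part
  have hrange : ∑ k ∈ Finset.range (S + 1), g k
      = ((S : ℝ) + 1) * ((S : ℝ) + 2) / 2 * l ^ S
        + ((S : ℝ) + 1) * (2 * l ^ (S + 2) / (1 - l ^ 2)) := by
    have hterm : ∀ k ∈ Finset.range (S + 1),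
        g k = ((S : ℝ) - (k : ℝ) + 1) * l ^ S + 2 * l ^ (S + 2) / (1 - l ^ 2) := by
      intro k hk
      have hk' : k ≤ S := by have := Finset.mem_range.mp hk; omega
      show l ^ ((k : ℤ)).natAbs * Hfun l ((S : ℤ) - (k : ℤ)) = _
      have ha : ((k : ℤ)).natAbs = k := by omega
      have hb : ((S : ℤ) - (k : ℤ)).natAbs = S - k := by omega
      rw [ha, Hfun, hb]
      have e1 : l ^ k * l ^ (S - k) = l ^ S := by
        rw [← pow_add]; congr 1; omega
      have e2 : l ^ k * l ^ (S - k + 2) = l ^ (S + 2) := by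
        rw [← pow_add]; congr 1; omega
      have e3 : ((S - k : ℕ) : ℝ) = (S : ℝ) - (k : ℝ) := by
        push_cast [Nat.cast_sub hk']; ring
      calc l ^ k * ((((S - k : ℕ) : ℝ) + 1) * l ^ (S - k)
              + 2 * l ^ (S - k + 2) / (1 - l ^ 2))
          = (((S - k : ℕ) : ℝ) + 1) * (l ^ k * l ^ (S - k))
              + 2 / (1 - l ^ 2) * (l ^ k * l ^ (S - k + 2)) := by ring
        _ = ((S : ℝ) - (k : ℝ) + 1) * l ^ S + 2 * l ^ (S + 2) / (1 - l ^ 2) := by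
            rw [e1, e2, e3]; ring
    rw [Finset.sum_congr rfl hterm, Finset.sum_add_distrib, Finset.sum_const,
      Finset.card_range, nsmul_eq_mul]
    have : ∑ k ∈ Finset.range (S + 1), (((S : ℝ) - (k : ℝ) + 1) * l ^ S)
        = (∑ k ∈ Finset.range (S + 1), ((S : ℝ) - (k : ℝ) + 1)) * l ^ S := by
      rw [Finset.sum_mul]
    rw [this]
    have hsum1 : ∑ k ∈ Finset.range (S + 1), ((S : ℝ) - (k : ℝ) + 1)
        = ((S : ℝ) + 1) * ((S : ℝ) + 2) / 2 := by
      have hrefl := Finset.sum_range_reflect (fun k => ((k : ℝ) + 1)) (S + 1)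
      have hcongr : ∑ k ∈ Finset.range (S + 1), ((S : ℝ) - (k : ℝ) + 1)
          = ∑ k ∈ Finset.range (S + 1), (((S + 1 - 1 - k : ℕ) : ℝ) + 1) := by
        refine Finset.sum_congr rfl fun k hk => ?_
        have hk' : k ≤ S := by have := Finset.mem_range.mp hk; omega
        have : ((S + 1 - 1 - k : ℕ) : ℝ) = (S : ℝ) - (k : ℝ) := by
          have h9 : S + 1 - 1 - k = S - k := by omega
          rw [h9, Nat.cast_sub hk']
        rw [this]
      rw [hcongr, hrefl, aux_gauss]
      push_cast
      ring
    rw [hsum1]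
    push_cast
    ring
  -- combine
  have hT := hpos.of_nat_of_neg_add_one hneg
  rw [hrange] at hT
  have hAeq : A = _ := houter.unique hT
  rw [hA.tsum_eq, hAeq]
  have e2 : l ^ (S + 2) = l ^ S * l ^ 2 := by rw [pow_add]
  have e4 : l ^ (S + 4) = l ^ S * l ^ 4 := by rw [pow_add]
  rw [e2, e4]
  field_simp
  ring
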